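/- Let α be a real number and y a real number such that the sequence 2^j · y converges to 0 modulo αℤ uniformly as j → ∞ (i.e., dist(2^j y, αℤ) → 0). Then y = 2^{-N} k α for some integers k and N. -/

import Mathlib

lemma infDist_lattice (α : ℝ) (hα : α ≠ 0) (x : ℝ) :
    Metric.infDist x (Set.range fun k : ℤ => (k : ℝ) * α)
      = |α| * |x / α - round (x / α)| := by
  have key : ∀ k : ℤ, dist x ((k : ℝ) * α) = |α| * |x / α - k| := by
    intro k
    rw [Real.dist_eq, ← abs_mul]
    congr 1
    field_simp
  apply le_antisymm
  · calc Metric.infDist x (Set.range fun k : ℤ => (k : ℝ) * α)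
        ≤ dist x ((round (x / α) : ℝ) * α) :=
          Metric.infDist_le_dist_of_mem (Set.mem_range_self _)
      _ = |α| * |x / α - round (x / α)| := key _
  · rw [← not_lt, Metric.infDist_lt_iff ⟨_, Set.mem_range_self (0 : ℤ)⟩]
    rintro ⟨z, ⟨k, rfl⟩, hz⟩
    rw [key] at hz
    exact absurd hz (not_lt.mpr
      (mul_le_mul_of_nonneg_left (round_le (x / α) k) (abs_nonneg α)))

/-- If `2^j · y → 0` modulo `αℤ` (distance to the set `{kα : k ∈ ℤ}` tends to 0),
then `y = 2^{-N} k α` for some integers `k, N`. -/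
theorem stmt0 (α y : ℝ) (hα : α ≠ 0)
    (h : Filter.Tendsto
      (fun j : ℕ => Metric.infDist ((2:ℝ) ^ j * y) (Set.range fun k : ℤ => (k : ℝ) * α))
      Filter.atTop (nhds 0)) :
    ∃ (k N : ℤ), y = (2:ℝ) ^ (-N) * (k : ℝ) * α := by
  set s : ℕ → ℝ := fun j => (2:ℝ) ^ j * y / α with hs
  set D : ℕ → ℝ := fun j => |s j - round (s j)| with hD
  have hαpos : (0:ℝ) < |α| := abs_pos.mpr hα
  have hDtend : Filter.Tendsto D Filter.atTop (nhds 0) := by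
    have h' : Filter.Tendsto (fun j => |α| * D j) Filter.atTop (nhds 0) := by
      simpa [infDist_lattice α hα] using h
    have := h'.const_mul (|α|)⁻¹
    simpa [mul_comm, mul_assoc, inv_mul_cancel_left₀ hαpos.ne'] using this
  have hev : ∀ᶠ j in Filter.atTop, D j < 1/4 := by
    exact hDtend.eventually_lt_const (by norm_num)
  obtain ⟨J, hJ⟩ := hev.exists_forall_of_atTop
  -- doubling
  have hdouble : ∀ j, D j < 1/4 → D (j+1) = 2 * D j := by
    intro j hj
    have hsj : s (j+1) = 2 * s j := by
      simp [hs, pow_succ]; ring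
    set t : ℝ := s j - round (s j) with ht
    have h2t : round ((2:ℝ) * t) = 0 := by
      rw [round_eq_zero_iff]
      constructor
      · nlinarith [neg_abs_le t, hj, hD ▸ hj]
      · nlinarith [le_abs_self t]
    have hround : round (s (j+1)) = 2 * round (s j) := by
      have : s (j+1) = 2 * t + ((2 * round (s j) : ℤ) : ℝ) := by
        push_cast [ht, hsj]; ring
      rw [this, round_add_intCast, h2t, zero_add]
    have : s (j+1) - round (s (j+1)) = 2 * t := by
      rw [hround, hsj]; push_cast [ht]; ring
    simp only [hD]
    rw [this, abs_mul]
    norm_num [ht]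
  have hiter : ∀ m, D (J + m) = 2 ^ m * D J := by
    intro m
    induction m with
    | zero => simp
    | succ m ih =>
      have hlt : D (J + m) < 1/4 := hJ _ (Nat.le_add_right _ _)
      have := hdouble (J + m) hlt
      rw [← Nat.add_assoc] at *
      rw [this, ih, pow_succ]; ring
  have hDJ : D J = 0 := by
    by_contra hne
    have hpos : 0 < D J := lt_of_le_of_ne (abs_nonneg _) (Ne.symm hne)
    obtain ⟨m, hm⟩ := pow_unbounded_of_one_lt ((1/4) / D J) (by norm_num : (1:ℝ) < 2)
    have h1 : D (J + m) < 1/4 := hJ _ (Nat.le_add_right _ _)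
    rw [hiter m] at h1
    have : (1/4 : ℝ) / D J * D J < 2 ^ m * D J := by
      exact mul_lt_mul_of_pos_right hm hpos
    rw [div_mul_cancel₀ _ hpos.ne'] at this
    linarith
  have hs0 : s J = round (s J) := by
    have := abs_eq_zero.mp hDJ
    linarith [sub_eq_zero.mp this]
  refine ⟨round (s J), (J : ℤ), ?_⟩
  have h2J : (2:ℝ) ^ J ≠ 0 := by positivity
  have : (2:ℝ) ^ J * y = (round (s J) : ℝ) * α := by
    rw [← hs0]; simp only [hs]; field_simp
  rw [zpow_neg, zpow_natCast]
  field_simp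
  linarith [this]
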